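/- There exists an absolute constant c > 0 such that the following holds. Let A be an n×n random matrix whose entries Y_{ij} (for all 1 ≤ i,j ≤ n) are independent real random variables, each moment bounded with parameter L = 1 and satisfying E[Y_{ij}] = 0. Let P(A) = Σ_{σ ∈ S_n} Π_{i=1}^n A_{i,σ(i)} denote the permanent of A. Then for every t > 0, Pr[ |P(A)| ≥ t·√(n!) ] ≤ max{ e^{−n}, e² · e^{−c·t^{2/n}} }. -/

import Mathlib

open MeasureTheory ProbabilityTheory Finset

/-- A real random variable `Z` is *moment bounded* with parameter `L > 0` if all its absolute
moments exist and for every integer `i ≥ 1`, `E[|Z|^i] ≤ i·L·E[|Z|^{i-1}]`. -/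
def MomentBounded {Ω : Type*} [MeasurableSpace Ω] (P : Measure Ω) (Z : Ω → ℝ) (L : ℝ) : Prop :=
  (∀ i : ℕ, Integrable (fun ω => |Z ω| ^ i) P) ∧
  ∀ i : ℕ, 1 ≤ i → (∫ ω, |Z ω| ^ i ∂P) ≤ i * L * ∫ ω, |Z ω| ^ (i - 1) ∂P

lemma prod_aux {Ω : Type} [MeasurableSpace Ω] {P : Measure Ω} [IsProbabilityMeasure P]
    {ι : Type*} {Z : ι → Ω → ℝ} (hmeas : ∀ i, Measurable (Z i))
    (hindep : iIndepFun (m := fun _ => Real.measurableSpace) Z P)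
    (hint : ∀ i, Integrable (Z i) P) (s : Finset ι) :
    Integrable (fun ω => ∏ i ∈ s, Z i ω) P ∧
    (∫ ω, ∏ i ∈ s, Z i ω ∂P) = ∏ i ∈ s, ∫ ω, Z i ω ∂P := by
  classical
  induction s using Finset.cons_induction with
  | empty => simp
  | cons i s hi ih =>
    have hIndep : IndepFun (∏ j ∈ s, Z j) (Z i) P :=
      hindep.indepFun_finsetProd_of_notMem hmeas hi
    have hps : (fun ω => ∏ j ∈ s, Z j ω) = ∏ j ∈ s, Z j := by
      funext ω; simp [Finset.prod_apply]
    have h1 : Integrable ((∏ j ∈ s, Z j) * Z i) P :=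
      hIndep.integrable_mul (hps ▸ ih.1) (hint i)
    have h2 := hIndep.integral_mul_eq_mul_integral (hps ▸ ih.1).aestronglyMeasurable (hint i).aestronglyMeasurable
    constructor
    · have : (fun ω => ∏ j ∈ Finset.cons i s hi, Z j ω) = (∏ j ∈ s, Z j) * Z i := by
        funext ω; simp [Finset.prod_cons, Finset.prod_insert hi, Finset.prod_apply, mul_comm]
      rw [this]; exact h1
    · simp only [Finset.prod_cons]
      have : (fun ω => Z i ω * ∏ j ∈ s, Z j ω) = (∏ j ∈ s, Z j) * Z i := by
        funext ω; simp [Finset.prod_apply, mul_comm]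
      calc (∫ ω, Z i ω * ∏ j ∈ s, Z j ω ∂P) = ∫ ω, ((∏ j ∈ s, Z j) * Z i) ω ∂P := by rw [← this]
        _ = (∫ ω, (∏ j ∈ s, Z j) ω ∂P) * ∫ ω, Z i ω ∂P := h2
        _ = (∫ ω, Z i ω ∂P) * ∏ j ∈ s, ∫ ω, Z j ω ∂P := by
              rw [← hps, ih.2, mul_comm]


lemma prod_step {n : ℕ} (Y : Fin n → Fin n → ℝ) (σ : Equiv.Perm (Fin n)) :
    (∏ i, Y i (σ i)) = ∏ p : Fin n × Fin n, Y p.1 p.2 ^ (if σ p.1 = p.2 then 1 else 0) := by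
  rw [Fintype.prod_prod_type]
  refine Finset.prod_congr rfl fun i _ => ?_
  simp [pow_ite, Finset.prod_ite_eq]


lemma perm_sq_moment {Ω : Type} [MeasurableSpace Ω] (P : Measure Ω) [IsProbabilityMeasure P]
    (n : ℕ) (Y : Fin n → Fin n → Ω → ℝ)
    (hmeas : ∀ i j, Measurable (Y i j))
    (hind : iIndepFun (m := fun _ => Real.measurableSpace) (fun p : Fin n × Fin n => Y p.1 p.2) P)
    (hmb : ∀ i j, MomentBounded P (Y i j) 1)
    (hmean : ∀ i j, ∫ ω, Y i j ω ∂P = 0) :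
    Integrable (fun ω => (∑ σ : Equiv.Perm (Fin n), ∏ i, Y i (σ i) ω) ^ 2) P ∧
    (∫ ω, (∑ σ : Equiv.Perm (Fin n), ∏ i, Y i (σ i) ω) ^ 2 ∂P) ≤ 2 ^ n * n.factorial := by
  classical
  -- integrability of powers
  have hintpow : ∀ (i j : Fin n) (m : ℕ), Integrable (fun ω => Y i j ω ^ m) P := by
    intro i j m
    refine ((hmb i j).1 m).mono' ((hmeas i j).pow_const m).aestronglyMeasurable ?_
    filter_upwards with ω
    simp [abs_pow]
  -- the expansion of the square
  have hexp : ∀ ω, (∑ σ : Equiv.Perm (Fin n), ∏ i, Y i (σ i) ω) ^ 2 =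
      ∑ σ : Equiv.Perm (Fin n), ∑ τ : Equiv.Perm (Fin n),
        ∏ p : Fin n × Fin n, Y p.1 p.2 ω ^
          ((if σ p.1 = p.2 then 1 else 0) + (if τ p.1 = p.2 then 1 else 0)) := by
    intro ω
    rw [sq, Finset.sum_mul_sum]
    refine Finset.sum_congr rfl fun σ _ => Finset.sum_congr rfl fun τ _ => ?_
    rw [prod_step (fun i j => Y i j ω) σ, prod_step (fun i j => Y i j ω) τ,
      ← Finset.prod_mul_distrib]
    refine Finset.prod_congr rfl fun p _ => ?_
    rw [← pow_add]
  -- per (σ, τ) data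
  have hZ : ∀ m : Fin n × Fin n → ℕ,
      Integrable (fun ω => ∏ p : Fin n × Fin n, Y p.1 p.2 ω ^ m p) P ∧
      (∫ ω, ∏ p : Fin n × Fin n, Y p.1 p.2 ω ^ m p ∂P) =
        ∏ p : Fin n × Fin n, ∫ ω, Y p.1 p.2 ω ^ m p ∂P := by
    intro m
    exact prod_aux (fun p => (hmeas p.1 p.2).pow_const (m p))
      (hind.comp (fun p x => x ^ m p) (fun p => measurable_id.pow_const (m p)))
      (fun p => hintpow p.1 p.2 (m p)) Finset.univ
  set e : Equiv.Perm (Fin n) → Fin n × Fin n → ℕ :=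
    fun σ p => if σ p.1 = p.2 then 1 else 0 with he
  have hint2 : Integrable (fun ω => (∑ σ : Equiv.Perm (Fin n), ∏ i, Y i (σ i) ω) ^ 2) P := by
    have : (fun ω => (∑ σ : Equiv.Perm (Fin n), ∏ i, Y i (σ i) ω) ^ 2) =
        fun ω => ∑ σ : Equiv.Perm (Fin n), ∑ τ : Equiv.Perm (Fin n),
          ∏ p : Fin n × Fin n, Y p.1 p.2 ω ^ (e σ p + e τ p) := by
      funext ω; exact hexp ω
    rw [this]
    exact integrable_finset_sum _ fun σ _ => integrable_finset_sum _ fun τ _ =>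
      (hZ fun p => e σ p + e τ p).1
  refine ⟨hint2, ?_⟩
  have hsplit : (∫ ω, (∑ σ : Equiv.Perm (Fin n), ∏ i, Y i (σ i) ω) ^ 2 ∂P) =
      ∑ σ : Equiv.Perm (Fin n), ∑ τ : Equiv.Perm (Fin n),
        ∏ p : Fin n × Fin n, ∫ ω, Y p.1 p.2 ω ^ (e σ p + e τ p) ∂P := by
    simp_rw [hexp]
    rw [integral_finset_sum _ fun σ _ => integrable_finset_sum _ fun τ _ =>
      (hZ fun p => e σ p + e τ p).1]
    refine Finset.sum_congr rfl fun σ _ => ?_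
    rw [integral_finset_sum _ fun τ _ => (hZ fun p => e σ p + e τ p).1]
    exact Finset.sum_congr rfl fun τ _ => (hZ fun p => e σ p + e τ p).2
  rw [hsplit]
  -- off-diagonal terms vanish
  have hoff : ∀ σ τ : Equiv.Perm (Fin n), σ ≠ τ →
      (∏ p : Fin n × Fin n, ∫ ω, Y p.1 p.2 ω ^ (e σ p + e τ p) ∂P) = 0 := by
    intro σ τ hστ
    have : ∃ i, σ i ≠ τ i := by
      by_contra h
      push_neg at h
      exact hστ (Equiv.ext h)
    obtain ⟨i, hi⟩ := this
    refine Finset.prod_eq_zero (Finset.mem_univ (i, σ i)) ?_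
    have h1 : e σ (i, σ i) = 1 := by simp [he]
    have hne : ¬ τ i = σ i := fun h => hi h.symm
    have h2 : e τ (i, σ i) = 0 := by simp [he, hne]
    rw [h1, h2, add_zero]
    simpa using hmean i (σ i)
  have hdiag : ∀ σ : Equiv.Perm (Fin n),
      (∏ p : Fin n × Fin n, ∫ ω, Y p.1 p.2 ω ^ (e σ p + e σ p) ∂P) ≤ 2 ^ n := by
    intro σ
    have hEsq : ∀ i j : Fin n, (∫ ω, Y i j ω ^ 2 ∂P) ≤ 2 := by
      intro i j
      have h1 : (∫ ω, |Y i j ω| ^ 1 ∂P) ≤ 1 := by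
        have := (hmb i j).2 1 le_rfl
        simpa using this
      have h2 := (hmb i j).2 2 (by norm_num)
      have h2' : (∫ ω, |Y i j ω| ^ 2 ∂P) ≤ 2 * ∫ ω, |Y i j ω| ^ 1 ∂P := by
        simpa using h2
      have heq : (∫ ω, Y i j ω ^ 2 ∂P) = ∫ ω, |Y i j ω| ^ 2 ∂P := by
        refine integral_congr_ae (ae_of_all _ fun ω => ?_)
        simp [sq_abs]
      rw [heq]
      calc (∫ ω, |Y i j ω| ^ 2 ∂P) ≤ 2 * ∫ ω, |Y i j ω| ^ 1 ∂P := h2'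
        _ ≤ 2 * 1 := by linarith
        _ = 2 := by ring
    calc (∏ p : Fin n × Fin n, ∫ ω, Y p.1 p.2 ω ^ (e σ p + e σ p) ∂P)
        ≤ ∏ p : Fin n × Fin n, (if σ p.1 = p.2 then 2 else 1 : ℝ) := by
          refine Finset.prod_le_prod (fun p _ => ?_) (fun p _ => ?_)
          · refine integral_nonneg fun ω => ?_
            have : e σ p + e σ p = 2 * e σ p := by ring
            rw [this, pow_mul]
            positivity
          · by_cases h : σ p.1 = p.2
            · simp only [he, h, if_true]
              simpa using hEsq p.1 p.2
            · simp only [he, h, if_false]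
              simp
      _ = 2 ^ n := by
          rw [Fintype.prod_prod_type]
          simp [Finset.prod_ite_eq]
  calc (∑ σ : Equiv.Perm (Fin n), ∑ τ : Equiv.Perm (Fin n),
        ∏ p : Fin n × Fin n, ∫ ω, Y p.1 p.2 ω ^ (e σ p + e τ p) ∂P)
      = ∑ σ : Equiv.Perm (Fin n),
          ∏ p : Fin n × Fin n, ∫ ω, Y p.1 p.2 ω ^ (e σ p + e σ p) ∂P := by
        refine Finset.sum_congr rfl fun σ _ => ?_
        exact Finset.sum_eq_single_of_mem σ (Finset.mem_univ σ)
          (fun τ _ hτ => hoff σ τ (Ne.symm hτ))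
    _ ≤ ∑ _σ : Equiv.Perm (Fin n), (2 : ℝ) ^ n :=
        Finset.sum_le_sum fun σ _ => hdiag σ
    _ = 2 ^ n * n.factorial := by
        rw [Finset.sum_const, Finset.card_univ, Fintype.card_perm, Fintype.card_fin,
          nsmul_eq_mul, mul_comm]

lemma chebyshev_final {Ω : Type} [MeasurableSpace Ω] (P : Measure Ω) [IsProbabilityMeasure P]
    (n : ℕ) (X : Ω → ℝ)
    (hint2 : Integrable (fun ω => X ω ^ 2) P)
    (hsq : (∫ ω, X ω ^ 2 ∂P) ≤ 2 ^ n * n.factorial)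
    (t : ℝ) (ht : 0 < t) :
    (P {ω | t * Real.sqrt (Nat.factorial n) ≤ |X ω|}).toReal ≤
      max (Real.exp (-(n : ℝ)))
        (Real.exp 2 * Real.exp (-((Real.exp 1)⁻¹ * t ^ ((2 : ℝ) / (n : ℝ))))) := by
  set c : ℝ := (Real.exp 1)⁻¹ with hc
  have hc0 : 0 < c := by positivity
  set s := t ^ ((2 : ℝ) / (n : ℝ)) with hs
  have hs0 : 0 < s := Real.rpow_pos_of_pos ht _
  by_cases hcs : c * s ≤ 2
  · -- trivial case: bound is ≥ 1
    refine le_trans ?_ (le_max_right _ _)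
    have h1 : (P {ω | t * Real.sqrt (Nat.factorial n) ≤ |X ω|}).toReal ≤ 1 := by
      have := prob_le_one (μ := P) (s := {ω | t * Real.sqrt (Nat.factorial n) ≤ |X ω|})
      calc (P _).toReal ≤ (1 : ENNReal).toReal := ENNReal.toReal_mono ENNReal.one_ne_top this
        _ = 1 := ENNReal.toReal_one
    refine le_trans h1 ?_
    rw [← Real.exp_add]
    have : (0 : ℝ) ≤ 2 + -(c * s) := by linarith
    calc (1 : ℝ) = Real.exp 0 := Real.exp_zero.symm
      _ ≤ Real.exp (2 + -(c * s)) := Real.exp_le_exp.mpr this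
  · -- Chebyshev case
    push_neg at hcs
    have hn : n ≠ 0 := by
      intro h
      subst h
      rw [hs] at hcs
      simp at hcs
      have : c ≤ 1 := by
        rw [hc]
        rw [inv_le_one_iff₀]
        right
        exact Real.one_le_exp (by norm_num)
      linarith
    refine le_trans ?_ (le_max_left _ _)
    have hfac : (0 : ℝ) < n.factorial := by positivity
    have hsqrt : Real.sqrt n.factorial > 0 := Real.sqrt_pos.mpr hfac
    set a : ℝ := t * Real.sqrt n.factorial with ha
    have ha0 : 0 < a := mul_pos ht hsqrt
    have hset : {ω | a ≤ |X ω|} = {ω | a ^ 2 ≤ X ω ^ 2} := by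
      ext ω
      simp only [Set.mem_setOf_eq]
      rw [← sq_abs (X ω)]
      constructor
      · intro h; exact pow_le_pow_left₀ ha0.le h 2
      · intro h; exact le_of_pow_le_pow_left₀ two_ne_zero (abs_nonneg _) h
    have hmarkov := mul_meas_ge_le_integral_of_nonneg
      (ae_of_all P fun ω => sq_nonneg (X ω)) hint2 (a ^ 2)
    have ha2 : a ^ 2 = t ^ 2 * n.factorial := by
      rw [ha, mul_pow, Real.sq_sqrt hfac.le]
    have hmeas_fin : (P {ω | a ≤ |X ω|}).toReal ≤ 2 ^ n / t ^ 2 := by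
      rw [hset]
      have h2 : (P {ω | a ^ 2 ≤ X ω ^ 2}).toReal ≤ (∫ ω, X ω ^ 2 ∂P) / a ^ 2 := by
        rw [le_div_iff₀ (by positivity)]
        calc (P {ω | a ^ 2 ≤ X ω ^ 2}).toReal * a ^ 2
            = a ^ 2 * (P {ω | a ^ 2 ≤ X ω ^ 2}).toReal := mul_comm _ _
          _ ≤ ∫ ω, X ω ^ 2 ∂P := hmarkov
      refine le_trans h2 ?_
      rw [ha2]
      rw [div_le_div_iff₀ (by positivity) (by positivity)]
      calc (∫ ω, X ω ^ 2 ∂P) * t ^ 2 ≤ (2 ^ n * n.factorial) * t ^ 2 := by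
            have ht2 : (0:ℝ) ≤ t ^ 2 := sq_nonneg t
            exact mul_le_mul_of_nonneg_right hsq ht2
        _ = 2 ^ n * (t ^ 2 * n.factorial) := by ring
    refine le_trans hmeas_fin ?_
    -- now 2^n / t^2 ≤ exp (-n), using t^(2/n) > 2 e
    have hse : 2 * Real.exp 1 < s := by
      rw [hc] at hcs
      have h := mul_lt_mul_of_pos_left hcs (Real.exp_pos 1)
      have he : Real.exp 1 * ((Real.exp 1)⁻¹ * s) = s := by
        field_simp
      rw [he] at h
      linarith
    have hpow : s ^ n = t ^ 2 := by
      rw [hs, ← Real.rpow_natCast (t ^ ((2:ℝ)/(n:ℝ))) n, ← Real.rpow_mul ht.le,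
        div_mul_cancel₀ _ (Nat.cast_ne_zero.mpr hn)]
      norm_num [Real.rpow_two, Real.rpow_natCast]
    have h2e : (2 * Real.exp 1) ^ n ≤ t ^ 2 := by
      rw [← hpow]
      exact pow_le_pow_left₀ (by positivity) hse.le n
    have ht2pos : (0:ℝ) < t ^ 2 := by positivity
    calc (2:ℝ) ^ n / t ^ 2 ≤ 2 ^ n / (2 * Real.exp 1) ^ n := by
          apply div_le_div_of_nonneg_left (by positivity) (by positivity) h2e
      _ = (2 / (2 * Real.exp 1)) ^ n := by rw [div_pow]
      _ = (Real.exp 1)⁻¹ ^ n := by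
          congr 1
          field_simp
      _ = Real.exp (-(n : ℝ)) := by
          rw [← Real.exp_neg]
          rw [← Real.exp_nat_mul]
          congr 1
          ring

theorem permanent_concentration :
    ∃ c : ℝ, 0 < c ∧
      ∀ (Ω : Type) (_ : MeasurableSpace Ω) (P : Measure Ω), IsProbabilityMeasure P →
      ∀ (n : ℕ) (Y : Fin n → Fin n → Ω → ℝ),
        (∀ i j, Measurable (Y i j)) →
        iIndepFun (m := fun _ => Real.measurableSpace) (fun p : Fin n × Fin n => Y p.1 p.2) P →
        (∀ i j, MomentBounded P (Y i j) 1) →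
        (∀ i j, ∫ ω, Y i j ω ∂P = 0) →
      ∀ t : ℝ, 0 < t →
        (P {ω | t * Real.sqrt (Nat.factorial n) ≤
            |∑ σ : Equiv.Perm (Fin n), ∏ i, Y i (σ i) ω|}).toReal ≤
          max (Real.exp (-(n : ℝ)))
            (Real.exp 2 * Real.exp (-(c * t ^ ((2 : ℝ) / (n : ℝ))))) := by
  refine ⟨(Real.exp 1)⁻¹, by positivity, ?_⟩
  intro Ω mΩ P hP n Y hmeas hind hmb hmean t ht
  obtain ⟨hint2, hsq⟩ := perm_sq_moment P n Y hmeas hind hmb hmean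
  exact chebyshev_final P n (fun ω => ∑ σ : Equiv.Perm (Fin n), ∏ i, Y i (σ i) ω)
    hint2 hsq t ht
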